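/- With the STEGR non-metricity conjugate P^{bc}{}_a = −¼Q^{bc}{}_a + ¼Q^{cb}{}_a + ¼Q_a{}^{bc} + ¼δ^c_a(Q^b − Q̃^b) − ⅛g^{bc}Q_a − ⅛δ^b_a Q^c and Λ_{Ra}{}^{cbd} = ¼(−g^{bc}δ^d_a + g^{cd}δ^b_a), the quantity Λ_{Ta}{}^{bc} := P^{bc}{}_a − (1/√(−g))∇_d(√(−g)Λ_{Ra}{}^{cbd}) equals ½Q^{[cb]}{}_a − ½δ^{[c}_a Q̃^{b]} + ½δ^{[c}_a Q^{b]}, and is therefore antisymmetric in its last two indices b,c. -/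

import Mathlib

noncomputable section

open scoped BigOperators

/-- Partial derivative of a scalar field on coordinate space along coordinate `i`. -/
def pd {n : ℕ} (i : Fin n) (f : (Fin n → ℝ) → ℝ) (x : Fin n → ℝ) : ℝ :=
  fderiv ℝ f x (Pi.single i 1)

/-- Non-metricity `Q_{abc} = ∇_a g_{bc}` of the connection `Γ^a_{bc}` (components
`Γ a b c`, with `b` the derivative index). -/
def nonmetQ {n : ℕ} (g : Fin n → Fin n → (Fin n → ℝ) → ℝ)
    (Γ : Fin n → Fin n → Fin n → (Fin n → ℝ) → ℝ) (a b c : Fin n) (x : Fin n → ℝ) : ℝ :=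
  pd a (g b c) x - ∑ d, Γ d a b x * g d c x - ∑ d, Γ d a c x * g b d x

/-- Torsion `T^a_{bc} = 2Γ^a_{[bc]} = Γ^a_{bc} − Γ^a_{cb}`. -/
def torsion {n : ℕ} (Γ : Fin n → Fin n → Fin n → (Fin n → ℝ) → ℝ)
    (a b c : Fin n) (x : Fin n → ℝ) : ℝ :=
  Γ a b c x - Γ a c b x

/-- Christoffel symbols (Levi-Civita connection) of the metric `g` with inverse `ginv`. -/
def christoffel {n : ℕ} (g ginv : Fin n → Fin n → (Fin n → ℝ) → ℝ)
    (a b c : Fin n) (x : Fin n → ℝ) : ℝ :=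
  (1 / 2) * ∑ d, ginv a d x * (pd b (g d c) x + pd c (g d b) x - pd d (g b c) x)

/-- Riemann curvature `R^a_{bcd} = 2∂_{[c}Γ^a_{d]b} + 2Γ^a_{[c|e|}Γ^e_{d]b}`. -/
def riem {n : ℕ} (Γ : Fin n → Fin n → Fin n → (Fin n → ℝ) → ℝ)
    (a b c d : Fin n) (x : Fin n → ℝ) : ℝ :=
  pd c (Γ a d b) x - pd d (Γ a c b) x
    + ∑ e, (Γ a c e x * Γ e d b x - Γ a d e x * Γ e c b x)

/-- Kronecker delta. -/
def kron {n : ℕ} (a b : Fin n) : ℝ := if a = b then 1 else 0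

/-- First trace of the non-metricity, `Q_a = Q_{ab}{}^b = g^{bc} Q_{abc}`. -/
def qTr {n : ℕ} (g ginv : Fin n → Fin n → (Fin n → ℝ) → ℝ)
    (Γ : Fin n → Fin n → Fin n → (Fin n → ℝ) → ℝ) (a : Fin n) (x : Fin n → ℝ) : ℝ :=
  ∑ b, ∑ c, ginv b c x * nonmetQ g Γ a b c x

/-- Second trace of the non-metricity, `Q̃_a = Q^b{}_{ba} = g^{bc} Q_{cba}`. -/
def qTil {n : ℕ} (g ginv : Fin n → Fin n → (Fin n → ℝ) → ℝ)
    (Γ : Fin n → Fin n → Fin n → (Fin n → ℝ) → ℝ) (a : Fin n) (x : Fin n → ℝ) : ℝ :=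
  ∑ b, ∑ c, ginv b c x * nonmetQ g Γ c b a x

/-- Raised first trace `Q^a = g^{ae} Q_e`. -/
def qTrUp {n : ℕ} (g ginv : Fin n → Fin n → (Fin n → ℝ) → ℝ)
    (Γ : Fin n → Fin n → Fin n → (Fin n → ℝ) → ℝ) (a : Fin n) (x : Fin n → ℝ) : ℝ :=
  ∑ e, ginv a e x * qTr g ginv Γ e x

/-- Raised second trace `Q̃^a = g^{ae} Q̃_e`. -/
def qTilUp {n : ℕ} (g ginv : Fin n → Fin n → (Fin n → ℝ) → ℝ)
    (Γ : Fin n → Fin n → Fin n → (Fin n → ℝ) → ℝ) (a : Fin n) (x : Fin n → ℝ) : ℝ :=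
  ∑ e, ginv a e x * qTil g ginv Γ e x

/-- `Q_a{}^{bc} = g^{be} g^{cf} Q_{aef}`. -/
def qDU {n : ℕ} (g ginv : Fin n → Fin n → (Fin n → ℝ) → ℝ)
    (Γ : Fin n → Fin n → Fin n → (Fin n → ℝ) → ℝ) (a b c : Fin n) (x : Fin n → ℝ) : ℝ :=
  ∑ e, ∑ f, ginv b e x * ginv c f x * nonmetQ g Γ a e f x

/-- `Q^{bc}{}_a = g^{be} g^{cf} Q_{efa}`. -/
def qUD {n : ℕ} (g ginv : Fin n → Fin n → (Fin n → ℝ) → ℝ)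
    (Γ : Fin n → Fin n → Fin n → (Fin n → ℝ) → ℝ) (b c a : Fin n) (x : Fin n → ℝ) : ℝ :=
  ∑ e, ∑ f, ginv b e x * ginv c f x * nonmetQ g Γ e f a x

/-- The tensor `Λ_{Ra}{}^{cbd} = ¼(−g^{bc} δ^d_a + g^{cd} δ^b_a)`. -/
def lamR {n : ℕ} (ginv : Fin n → Fin n → (Fin n → ℝ) → ℝ)
    (a c b d : Fin n) (x : Fin n → ℝ) : ℝ :=
  (1 / 4) * (-(ginv b c x) * kron d a + ginv c d x * kron b a)

/-- The covariant divergence `∑_d ∇_d (√(−g) Λ_{Ra}{}^{cbd})` of the weight `−1`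
tensor density `λ_{Ra}{}^{cbd} = √(−g) Λ_{Ra}{}^{cbd}`:
`∇_d λ_a{}^{cbd} = ∂_d λ_a{}^{cbd} + Γ^c_{de} λ_a{}^{ebd} + Γ^b_{de} λ_a{}^{ced}
  + Γ^d_{de} λ_a{}^{cbe} − Γ^e_{da} λ_e{}^{cbd} − Γ^e_{de} λ_a{}^{cbd}`. -/
def covDivLamR {n : ℕ} (ginv : Fin n → Fin n → (Fin n → ℝ) → ℝ)
    (Γ : Fin n → Fin n → Fin n → (Fin n → ℝ) → ℝ)
    (sg : (Fin n → ℝ) → ℝ) (a c b : Fin n) (x : Fin n → ℝ) : ℝ :=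
  ∑ d, (pd d (fun y => sg y * lamR ginv a c b d y) x
    + ∑ e, Γ c d e x * sg x * lamR ginv a e b d x
    + ∑ e, Γ b d e x * sg x * lamR ginv a c e d x
    + ∑ e, Γ d d e x * sg x * lamR ginv a c b e x
    - ∑ e, Γ e d a x * sg x * lamR ginv e c b d x
    - ∑ e, Γ e d e x * sg x * lamR ginv a c b d x)

/-- The STEGR non-metricity conjugate `P^{bc}{}_a` (components `pConj b c a`):
`P^{bc}{}_a = −¼Q^{bc}{}_a + ¼Q^{cb}{}_a + ¼Q_a{}^{bc} + ¼δ^c_a(Q^b − Q̃^b)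
  − ⅛ g^{bc} Q_a − ⅛ δ^b_a Q^c`. -/
def pConj {n : ℕ} (g ginv : Fin n → Fin n → (Fin n → ℝ) → ℝ)
    (Γ : Fin n → Fin n → Fin n → (Fin n → ℝ) → ℝ) (b c a : Fin n) (x : Fin n → ℝ) : ℝ :=
  -(1 / 4) * qUD g ginv Γ b c a x + (1 / 4) * qUD g ginv Γ c b a x
    + (1 / 4) * qDU g ginv Γ a b c x
    + (1 / 4) * kron c a * (qTrUp g ginv Γ b x - qTilUp g ginv Γ b x)
    - (1 / 8) * ginv b c x * qTr g ginv Γ a x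
    - (1 / 8) * kron b a * qTrUp g ginv Γ c x


section LamTAux

variable {n : ℕ}

lemma sum_congr1 {f h : Fin n → ℝ} (H : ∀ i, f i = h i) : ∑ i, f i = ∑ i, h i :=
  Finset.sum_congr rfl fun i _ => H i

lemma pd_mul (i : Fin n) {f h : (Fin n → ℝ) → ℝ} {x : Fin n → ℝ}
    (hf : DifferentiableAt ℝ f x) (hh : DifferentiableAt ℝ h x) :
    pd i (fun y => f y * h y) x = pd i f x * h x + f x * pd i h x := by
  unfold pd; rw [fderiv_fun_mul hf hh]; simp; ring

lemma pd_cmul (i : Fin n) (c : ℝ) {f : (Fin n → ℝ) → ℝ} {x : Fin n → ℝ}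
    (hf : DifferentiableAt ℝ f x) :
    pd i (fun y => c * f y) x = c * pd i f x := by
  unfold pd; rw [fderiv_const_mul hf]; simp

lemma pd_sub (i : Fin n) {f h : (Fin n → ℝ) → ℝ} {x : Fin n → ℝ}
    (hf : DifferentiableAt ℝ f x) (hh : DifferentiableAt ℝ h x) :
    pd i (fun y => f y - h y) x = pd i f x - pd i h x := by
  unfold pd; rw [fderiv_fun_sub hf hh]; simp

lemma pd_sum (i : Fin n) (f : Fin n → (Fin n → ℝ) → ℝ) {x : Fin n → ℝ}
    (hf : ∀ j, DifferentiableAt ℝ (f j) x) :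
    pd i (fun y => ∑ j, f j y) x = ∑ j, pd i (f j) x := by
  unfold pd; rw [fderiv_fun_sum (fun j _ => hf j)]; simp

lemma pd_const (i : Fin n) (c : ℝ) (x : Fin n → ℝ) : pd i (fun _ => c) x = 0 := by
  simp [pd]

lemma kron_comm (a b : Fin n) : kron a b = kron b a := by
  simp [kron, eq_comm]

lemma sum_kron_mul (a : Fin n) (f : Fin n → ℝ) : ∑ d, kron d a * f d = f a := by
  simp [kron, ite_mul]

lemma covdiv_eq {n : ℕ} (g ginv : Fin n → Fin n → (Fin n → ℝ) → ℝ)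
    (Γ : Fin n → Fin n → Fin n → (Fin n → ℝ) → ℝ) (sg : (Fin n → ℝ) → ℝ)
    (hgsym : ∀ a b, g a b = g b a) (hginvsym : ∀ a b, ginv a b = ginv b a)
    (hinv : ∀ (a b : Fin n) (x : Fin n → ℝ),
      ∑ c, ginv a c x * g c b x = if a = b then (1 : ℝ) else 0)
    (hgdiff : ∀ a b, Differentiable ℝ (g a b))
    (hginvdiff : ∀ a b, Differentiable ℝ (ginv a b))
    (hsgdiff : Differentiable ℝ sg)
    (hsg : ∀ (d : Fin n) (x : Fin n → ℝ),
      pd d sg x = (1 / 2) * sg x * ∑ b, ∑ c, ginv b c x * pd d (g b c) x)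
    (htf : ∀ a b c x, Γ a b c x = Γ a c b x)
    (a c b : Fin n) (x : Fin n → ℝ) :
    covDivLamR ginv Γ sg a c b x = sg x * (
      -(1/8) * ginv b c x * qTr g ginv Γ a x
      + (1/4) * qDU g ginv Γ a b c x
      + (1/8) * kron b a * qTrUp g ginv Γ c x
      - (1/4) * kron b a * qTilUp g ginv Γ c x) := by
  classical
  have hdg : ∀ p q, DifferentiableAt ℝ (g p q) x := fun p q => (hgdiff p q).differentiableAt
  have hdgi : ∀ p q, DifferentiableAt ℝ (ginv p q) x := fun p q => (hginvdiff p q).differentiableAt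
  have hdsg : DifferentiableAt ℝ sg x := hsgdiff.differentiableAt
  have K : ∀ p q, ∑ r, ginv p r x * g r q x = kron p q := by
    intro p q; simpa [kron] using hinv p q x
  -- generic contractions
  have con1 : ∀ (P : Fin n) (F : Fin n → ℝ),
      ∑ q, ginv P q x * ∑ d, F d * g d q x = F P := by
    intro P F
    calc ∑ q, ginv P q x * ∑ d, F d * g d q x
        = ∑ q, ∑ d, F d * (ginv P q x * g d q x) := by
          refine sum_congr1 fun q => ?_
          rw [Finset.mul_sum]; exact sum_congr1 fun d => by ring
      _ = ∑ d, ∑ q, F d * (ginv P q x * g d q x) := Finset.sum_comm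
      _ = ∑ d, F d * kron P d := by
          refine sum_congr1 fun d => ?_
          rw [← Finset.mul_sum]
          congr 1
          rw [← K P d]
          exact sum_congr1 fun q => by rw [hgsym d q]
      _ = ∑ d, kron d P * F d := sum_congr1 fun d => by rw [kron_comm d P]; ring
      _ = F P := sum_kron_mul P F
  have con2 : ∀ (P : Fin n) (F : Fin n → ℝ),
      ∑ q, ginv P q x * ∑ d, F d * g q d x = F P := by
    intro P F
    rw [← con1 P F]
    refine sum_congr1 fun q => ?_
    congr 1
    exact sum_congr1 fun d => by rw [hgsym q d]
  -- derivative of the inverse metric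
  have hdginv : ∀ (d p s : Fin n), pd d (ginv p s) x
      = -∑ e, ∑ f, ginv p e x * ginv s f x * pd d (g e f) x := by
    intro d p s
    have hzero : ∀ q, ∑ r, (pd d (ginv p r) x * g r q x + ginv p r x * pd d (g r q) x) = 0 := by
      intro q
      have h1 : pd d (fun y => ∑ r, ginv p r y * g r q y) x
          = ∑ r, (pd d (ginv p r) x * g r q x + ginv p r x * pd d (g r q) x) := by
        rw [pd_sum d _ (fun r => (hdgi p r).fun_mul (hdg r q))]
        exact sum_congr1 fun r => pd_mul d (hdgi p r) (hdg r q)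
      have h2 : (fun y => ∑ r, ginv p r y * g r q y) = (fun _ => if p = q then (1:ℝ) else 0) :=
        funext fun y => hinv p q y
      rw [h2, pd_const] at h1
      exact h1.symm
    have hstep : ∀ q, ∑ r, pd d (ginv p r) x * g r q x
        = -∑ r, ginv p r x * pd d (g r q) x := by
      intro q
      have h := hzero q
      rw [Finset.sum_add_distrib] at h
      linarith
    calc pd d (ginv p s) x
        = ∑ r, kron r s * pd d (ginv p r) x := (sum_kron_mul s fun r => pd d (ginv p r) x).symm
      _ = ∑ r, (∑ q, ginv s q x * g q r x) * pd d (ginv p r) x := by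
          refine sum_congr1 fun r => ?_
          rw [kron_comm r s, ← K s r]
      _ = ∑ r, ∑ q, ginv s q x * (g q r x * pd d (ginv p r) x) := by
          refine sum_congr1 fun r => ?_
          rw [Finset.sum_mul]; exact sum_congr1 fun q => by ring
      _ = ∑ q, ∑ r, ginv s q x * (g q r x * pd d (ginv p r) x) := Finset.sum_comm
      _ = ∑ q, ginv s q x * ∑ r, pd d (ginv p r) x * g r q x := by
          refine sum_congr1 fun q => ?_
          rw [Finset.mul_sum]
          refine sum_congr1 fun r => ?_
          rw [hgsym q r]; ring
      _ = ∑ q, ginv s q x * -∑ r, ginv p r x * pd d (g r q) x :=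
          sum_congr1 fun q => by rw [hstep q]
      _ = ∑ q, -(∑ r, ginv p r x * ginv s q x * pd d (g r q) x) := by
          refine sum_congr1 fun q => ?_
          rw [mul_neg, Finset.mul_sum]
          exact congrArg Neg.neg (sum_congr1 fun r => by ring)
      _ = -∑ q, ∑ r, ginv p r x * ginv s q x * pd d (g r q) x := by
          rw [Finset.sum_neg_distrib]
      _ = -∑ e, ∑ f, ginv p e x * ginv s f x * pd d (g e f) x :=
          congrArg Neg.neg Finset.sum_comm
  -- the traces of the non-metricity
  have hqTrGen : ∀ u, qTr g ginv Γ u x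
      = (∑ p, ∑ q, ginv p q x * pd u (g p q) x) - 2 * ∑ d, Γ d d u x := by
    intro u
    have hT1 : (∑ p, ∑ q, ginv p q x * ∑ d, Γ d u p x * g d q x) = ∑ d, Γ d d u x :=
      calc (∑ p, ∑ q, ginv p q x * ∑ d, Γ d u p x * g d q x)
          = ∑ p, Γ p u p x := sum_congr1 fun p => con1 p fun d => Γ d u p x
        _ = ∑ d, Γ d d u x := sum_congr1 fun p => htf p u p x
    have hT2 : (∑ p, ∑ q, ginv p q x * ∑ d, Γ d u q x * g p d x) = ∑ d, Γ d d u x :=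
      calc (∑ p, ∑ q, ginv p q x * ∑ d, Γ d u q x * g p d x)
          = ∑ q, ∑ p, ginv p q x * ∑ d, Γ d u q x * g p d x := Finset.sum_comm
        _ = ∑ q, ∑ p, ginv q p x * ∑ d, Γ d u q x * g p d x :=
            sum_congr1 fun q => sum_congr1 fun p => by rw [hginvsym p q]
        _ = ∑ q, Γ q u q x := sum_congr1 fun q => con2 q fun d => Γ d u q x
        _ = ∑ d, Γ d d u x := sum_congr1 fun q => htf q u q x
    simp only [qTr, nonmetQ, mul_sub, Finset.sum_sub_distrib]
    rw [hT1, hT2]; ring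
  have hqTrUp : qTrUp g ginv Γ c x
      = (∑ d, ginv c d x * ∑ p, ∑ q, ginv p q x * pd d (g p q) x)
        - 2 * ∑ d, ∑ e, ginv c e x * Γ d d e x := by
    have hB6' : (∑ e, ginv c e x * ∑ d, Γ d d e x) = ∑ d, ∑ e, ginv c e x * Γ d d e x :=
      calc (∑ e, ginv c e x * ∑ d, Γ d d e x)
          = ∑ e, ∑ d, ginv c e x * Γ d d e x := sum_congr1 fun e => by rw [Finset.mul_sum]
        _ = ∑ d, ∑ e, ginv c e x * Γ d d e x := Finset.sum_comm
    calc qTrUp g ginv Γ c x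
        = ∑ e, ginv c e x * ((∑ p, ∑ q, ginv p q x * pd e (g p q) x) - 2 * ∑ d, Γ d d e x) := by
          simp only [qTrUp]
          exact sum_congr1 fun e => by rw [hqTrGen e]
      _ = (∑ e, ginv c e x * ∑ p, ∑ q, ginv p q x * pd e (g p q) x)
          - 2 * ∑ e, ginv c e x * ∑ d, Γ d d e x := by
          rw [Finset.mul_sum]
          rw [← Finset.sum_sub_distrib]
          exact sum_congr1 fun e => by ring
      _ = (∑ d, ginv c d x * ∑ p, ∑ q, ginv p q x * pd d (g p q) x)
          - 2 * ∑ d, ∑ e, ginv c e x * Γ d d e x := by rw [hB6']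
  have hqTilGen : ∀ u, qTil g ginv Γ u x
      = (∑ p, ∑ q, ginv p q x * pd q (g p u) x)
        - (∑ p, ∑ q, ginv p q x * ∑ d, Γ d q p x * g d u x)
        - ∑ d, Γ d d u x := by
    intro u
    have hT3 : (∑ p, ∑ q, ginv p q x * ∑ d, Γ d q u x * g p d x) = ∑ d, Γ d d u x :=
      calc (∑ p, ∑ q, ginv p q x * ∑ d, Γ d q u x * g p d x)
          = ∑ q, ∑ p, ginv p q x * ∑ d, Γ d q u x * g p d x := Finset.sum_comm
        _ = ∑ q, ∑ p, ginv q p x * ∑ d, Γ d q u x * g p d x :=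
            sum_congr1 fun q => sum_congr1 fun p => by rw [hginvsym p q]
        _ = ∑ d, Γ d d u x := sum_congr1 fun q => con2 q fun d => Γ d q u x
    simp only [qTil, nonmetQ, mul_sub, Finset.sum_sub_distrib]
    rw [hT3]
  have hqTilUp : qTilUp g ginv Γ c x
      = (∑ d, ∑ e, ∑ f, ginv c e x * ginv d f x * pd d (g e f) x)
        - (∑ d, ∑ e, ginv e d x * Γ c d e x)
        - ∑ d, ∑ e, ginv c e x * Γ d d e x := by
    have hP1 : (∑ u, ginv c u x * ∑ p, ∑ q, ginv p q x * pd q (g p u) x)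
        = ∑ d, ∑ e, ∑ f, ginv c e x * ginv d f x * pd d (g e f) x :=
      calc (∑ u, ginv c u x * ∑ p, ∑ q, ginv p q x * pd q (g p u) x)
          = ∑ u, ∑ p, ∑ q, ginv c u x * (ginv p q x * pd q (g p u) x) := by
            refine sum_congr1 fun u => ?_
            rw [Finset.mul_sum]
            exact sum_congr1 fun p => by rw [Finset.mul_sum]
        _ = ∑ u, ∑ q, ∑ p, ginv c u x * (ginv p q x * pd q (g p u) x) :=
            sum_congr1 fun u => Finset.sum_comm
        _ = ∑ u, ∑ q, ∑ p, ginv c u x * ginv q p x * pd q (g u p) x := by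
            refine sum_congr1 fun u => sum_congr1 fun q => sum_congr1 fun p => ?_
            rw [hginvsym p q, hgsym p u]; ring
        _ = ∑ q, ∑ u, ∑ p, ginv c u x * ginv q p x * pd q (g u p) x := Finset.sum_comm
    have hP2 : (∑ u, ginv c u x * ∑ p, ∑ q, ginv p q x * ∑ d, Γ d q p x * g d u x)
        = ∑ d, ∑ e, ginv e d x * Γ c d e x :=
      calc (∑ u, ginv c u x * ∑ p, ∑ q, ginv p q x * ∑ d, Γ d q p x * g d u x)
          = ∑ u, ∑ p, ∑ q, ginv c u x * (ginv p q x * ∑ d, Γ d q p x * g d u x) := by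
            refine sum_congr1 fun u => ?_
            rw [Finset.mul_sum]
            exact sum_congr1 fun p => by rw [Finset.mul_sum]
        _ = ∑ p, ∑ u, ∑ q, ginv c u x * (ginv p q x * ∑ d, Γ d q p x * g d u x) :=
            Finset.sum_comm
        _ = ∑ p, ∑ q, ∑ u, ginv c u x * (ginv p q x * ∑ d, Γ d q p x * g d u x) :=
            sum_congr1 fun p => Finset.sum_comm
        _ = ∑ p, ∑ q, ginv p q x * ∑ u, ginv c u x * ∑ d, Γ d q p x * g d u x := by
            refine sum_congr1 fun p => sum_congr1 fun q => ?_
            rw [Finset.mul_sum]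
            exact sum_congr1 fun u => by ring
        _ = ∑ p, ∑ q, ginv p q x * Γ c q p x := by
            refine sum_congr1 fun p => sum_congr1 fun q => ?_
            exact congrArg _ (con1 c fun d => Γ d q p x)
        _ = ∑ q, ∑ p, ginv p q x * Γ c q p x := Finset.sum_comm
        _ = ∑ d, ∑ e, ginv e d x * Γ c d e x := rfl
    have hP3 : (∑ u, ginv c u x * ∑ d, Γ d d u x) = ∑ d, ∑ e, ginv c e x * Γ d d e x :=
      calc (∑ u, ginv c u x * ∑ d, Γ d d u x)
          = ∑ u, ∑ d, ginv c u x * Γ d d u x := sum_congr1 fun u => by rw [Finset.mul_sum]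
        _ = ∑ d, ∑ e, ginv c e x * Γ d d e x := Finset.sum_comm
    calc qTilUp g ginv Γ c x
        = ∑ u, (ginv c u x * (∑ p, ∑ q, ginv p q x * pd q (g p u) x)
            - ginv c u x * (∑ p, ∑ q, ginv p q x * ∑ d, Γ d q p x * g d u x)
            - ginv c u x * ∑ d, Γ d d u x) := by
          simp only [qTilUp]
          exact sum_congr1 fun u => by rw [hqTilGen u]; ring
      _ = (∑ u, ginv c u x * ∑ p, ∑ q, ginv p q x * pd q (g p u) x)
          - (∑ u, ginv c u x * ∑ p, ∑ q, ginv p q x * ∑ d, Γ d q p x * g d u x)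
          - ∑ u, ginv c u x * ∑ d, Γ d d u x := by
          simp only [Finset.sum_sub_distrib]
      _ = _ := by rw [hP1, hP2, hP3]
  -- the six pieces of the covariant divergence
  have hpdpt : ∀ d, pd d (fun y => sg y * lamR ginv a c b d y) x
      = (1/4) * kron b a * (pd d sg x * ginv c d x + sg x * pd d (ginv c d) x)
        - (1/4) * kron d a * (pd d sg x * ginv b c x + sg x * pd d (ginv b c) x) := by
    intro d
    have hfun : (fun y => sg y * lamR ginv a c b d y)
        = fun y => (1/4) * kron b a * (sg y * ginv c d y)
            - (1/4) * kron d a * (sg y * ginv b c y) := by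
      funext y; simp only [lamR]; ring
    rw [hfun, pd_sub d ((hdsg.fun_mul (hdgi c d)).const_mul _) ((hdsg.fun_mul (hdgi b c)).const_mul _),
      pd_cmul d _ (hdsg.fun_mul (hdgi c d)), pd_cmul d _ (hdsg.fun_mul (hdgi b c)),
      pd_mul d hdsg (hdgi c d), pd_mul d hdsg (hdgi b c)]
  have h1 : (∑ d, pd d (fun y => sg y * lamR ginv a c b d y) x)
      = (1/8) * sg x * (kron b a * ∑ d, ginv c d x * ∑ p, ∑ q, ginv p q x * pd d (g p q) x)
        - (1/4) * sg x * (kron b a * ∑ d, ∑ e, ∑ f, ginv c e x * ginv d f x * pd d (g e f) x)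
        - ((1/8) * sg x * (∑ p, ∑ q, ginv p q x * pd a (g p q) x) * ginv b c x
            - (1/4) * sg x * ∑ e, ∑ f, ginv b e x * ginv c f x * pd a (g e f) x) := by
    calc (∑ d, pd d (fun y => sg y * lamR ginv a c b d y) x)
        = ∑ d, ((1/8) * sg x * (kron b a * (ginv c d x * ∑ p, ∑ q, ginv p q x * pd d (g p q) x))
            - (1/4) * sg x * (kron b a * ∑ e, ∑ f, ginv c e x * ginv d f x * pd d (g e f) x)
            - kron d a * ((1/8) * sg x * (∑ p, ∑ q, ginv p q x * pd d (g p q) x) * ginv b c x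
                - (1/4) * sg x * ∑ e, ∑ f, ginv b e x * ginv c f x * pd d (g e f) x)) := by
          refine sum_congr1 fun d => ?_
          rw [hpdpt d, hsg d x, hdginv d c d, hdginv d b c]
          ring
      _ = _ := by
          simp only [Finset.sum_sub_distrib]
          rw [sum_kron_mul]
          simp only [← Finset.mul_sum]
  have h2 : (∑ d, ∑ e, Γ c d e x * sg x * lamR ginv a e b d x)
      = -(1/4) * sg x * (∑ e, ginv b e x * Γ c a e x)
        + (1/4) * sg x * (kron b a * ∑ d, ∑ e, ginv e d x * Γ c d e x) := by
    calc (∑ d, ∑ e, Γ c d e x * sg x * lamR ginv a e b d x)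
        = ∑ d, ∑ e, (kron d a * (-(1/4) * sg x * (ginv b e x * Γ c d e x))
            + kron b a * ((1/4) * sg x * (ginv e d x * Γ c d e x))) := by
          refine sum_congr1 fun d => sum_congr1 fun e => ?_
          simp only [lamR]; ring
      _ = _ := by
          simp only [Finset.sum_add_distrib, ← Finset.mul_sum, sum_kron_mul]
          ring
  have h3 : (∑ d, ∑ e, Γ b d e x * sg x * lamR ginv a c e d x)
      = -(1/4) * sg x * (∑ e, ginv c e x * Γ b a e x)
        + (1/4) * sg x * (∑ d, ginv c d x * Γ b d a x) := by
    calc (∑ d, ∑ e, Γ b d e x * sg x * lamR ginv a c e d x)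
        = ∑ d, ∑ e, (kron d a * (-(1/4) * sg x * (ginv c e x * Γ b d e x))
            + kron e a * ((1/4) * sg x * (ginv c d x * Γ b d e x))) := by
          refine sum_congr1 fun d => sum_congr1 fun e => ?_
          simp only [lamR, hginvsym e c]; ring
      _ = _ := by
          simp only [Finset.sum_add_distrib, ← Finset.mul_sum, sum_kron_mul]
  have h4 : (∑ d, ∑ e, Γ d d e x * sg x * lamR ginv a c b e x)
      = -(1/4) * sg x * (ginv b c x * ∑ d, Γ d d a x)
        + (1/4) * sg x * (kron b a * ∑ d, ∑ e, ginv c e x * Γ d d e x) := by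
    calc (∑ d, ∑ e, Γ d d e x * sg x * lamR ginv a c b e x)
        = ∑ d, ∑ e, (kron e a * (-(1/4) * sg x * (ginv b c x * Γ d d e x))
            + kron b a * ((1/4) * sg x * (ginv c e x * Γ d d e x))) := by
          refine sum_congr1 fun d => sum_congr1 fun e => ?_
          simp only [lamR]; ring
      _ = _ := by
          simp only [Finset.sum_add_distrib, ← Finset.mul_sum, sum_kron_mul]
          ring
  have h5 : (∑ d, ∑ e, Γ e d a x * sg x * lamR ginv e c b d x)
      = -(1/4) * sg x * (ginv b c x * ∑ d, Γ d d a x)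
        + (1/4) * sg x * (∑ d, ginv c d x * Γ b d a x) := by
    calc (∑ d, ∑ e, Γ e d a x * sg x * lamR ginv e c b d x)
        = ∑ d, ∑ e, (kron e d * (-(1/4) * sg x * (ginv b c x * Γ e d a x))
            + kron e b * ((1/4) * sg x * (ginv c d x * Γ e d a x))) := by
          refine sum_congr1 fun d => sum_congr1 fun e => ?_
          simp only [lamR, kron_comm d e, kron_comm b e]; ring
      _ = _ := by
          simp only [Finset.sum_add_distrib, ← Finset.mul_sum, sum_kron_mul]
  have h6 : (∑ d, ∑ e, Γ e d e x * sg x * lamR ginv a c b d x)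
      = -(1/4) * sg x * (ginv b c x * ∑ d, Γ d d a x)
        + (1/4) * sg x * (kron b a * ∑ d, ∑ e, ginv c e x * Γ d d e x) := by
    have hswap : (∑ d, ginv c d x * ∑ e, Γ e e d x) = ∑ d, ∑ e, ginv c e x * Γ d d e x :=
      calc (∑ d, ginv c d x * ∑ e, Γ e e d x)
          = ∑ d, ∑ e, ginv c d x * Γ e e d x := sum_congr1 fun d => by rw [Finset.mul_sum]
        _ = ∑ d, ∑ e, ginv c e x * Γ d d e x := Finset.sum_comm
    calc (∑ d, ∑ e, Γ e d e x * sg x * lamR ginv a c b d x)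
        = ∑ d, ∑ e, (kron d a * (-(1/4) * sg x * (ginv b c x * Γ e e d x))
            + kron b a * ((1/4) * sg x * (ginv c d x * Γ e e d x))) := by
          refine sum_congr1 fun d => sum_congr1 fun e => ?_
          simp only [lamR]
          rw [htf e d e x]
          ring
      _ = _ := by
          simp only [Finset.sum_add_distrib, ← Finset.mul_sum, sum_kron_mul]
          rw [hswap]
          ring
  calc covDivLamR ginv Γ sg a c b x
      = (∑ d, pd d (fun y => sg y * lamR ginv a c b d y) x)
        + (∑ d, ∑ e, Γ c d e x * sg x * lamR ginv a e b d x)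
        + (∑ d, ∑ e, Γ b d e x * sg x * lamR ginv a c e d x)
        + (∑ d, ∑ e, Γ d d e x * sg x * lamR ginv a c b e x)
        - (∑ d, ∑ e, Γ e d a x * sg x * lamR ginv e c b d x)
        - (∑ d, ∑ e, Γ e d e x * sg x * lamR ginv a c b d x) := by
        simp only [covDivLamR, Finset.sum_add_distrib, Finset.sum_sub_distrib]
    _ = _ := by
        rw [h1, h2, h3, h4, h5, h6, hqTrGen a, hqTrUp, hqTilUp]
        have hqDU : qDU g ginv Γ a b c x
            = (∑ e, ∑ f, ginv b e x * ginv c f x * pd a (g e f) x)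
              - (∑ e, ginv b e x * Γ c a e x)
              - (∑ e, ginv c e x * Γ b a e x) := by
          have hT1 : (∑ e, ∑ f, ginv b e x * ginv c f x * ∑ d, Γ d a e x * g d f x)
              = ∑ e, ginv b e x * Γ c a e x :=
            calc (∑ e, ∑ f, ginv b e x * ginv c f x * ∑ d, Γ d a e x * g d f x)
                = ∑ e, ginv b e x * ∑ f, ginv c f x * ∑ d, Γ d a e x * g d f x := by
                  refine sum_congr1 fun e => ?_
                  rw [Finset.mul_sum]
                  exact sum_congr1 fun f => by ring
              _ = ∑ e, ginv b e x * Γ c a e x := by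
                  refine sum_congr1 fun e => ?_
                  exact congrArg _ (con1 c fun d => Γ d a e x)
          have hT2 : (∑ e, ∑ f, ginv b e x * ginv c f x * ∑ d, Γ d a f x * g e d x)
              = ∑ e, ginv c e x * Γ b a e x :=
            calc (∑ e, ∑ f, ginv b e x * ginv c f x * ∑ d, Γ d a f x * g e d x)
                = ∑ f, ∑ e, ginv b e x * ginv c f x * ∑ d, Γ d a f x * g e d x :=
                  Finset.sum_comm
              _ = ∑ f, ginv c f x * ∑ e, ginv b e x * ∑ d, Γ d a f x * g e d x := by
                  refine sum_congr1 fun f => ?_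
                  rw [Finset.mul_sum]
                  exact sum_congr1 fun e => by ring
              _ = ∑ f, ginv c f x * Γ b a f x := by
                  refine sum_congr1 fun f => ?_
                  exact congrArg _ (con2 b fun d => Γ d a f x)
          simp only [qDU, nonmetQ, mul_sub, Finset.sum_sub_distrib]
          rw [hT1, hT2]
        rw [hqDU]
        ring


end LamTAux

/-- **The torsion Lagrange multiplier in STEGR**: the quantity
`Λ_{Ta}{}^{bc} = P^{bc}{}_a − (1/√(−g)) ∇_d(√(−g) Λ_{Ra}{}^{cbd})` equals
`½Q^{[cb]}{}_a − ½δ^{[c}_a Q̃^{b]} + ½δ^{[c}_a Q^{b]}`, and is therefore antisymmetric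
in its last two indices `b, c`. -/
theorem lamT_identity {n : ℕ}
    (g ginv : Fin n → Fin n → (Fin n → ℝ) → ℝ)
    (Γ : Fin n → Fin n → Fin n → (Fin n → ℝ) → ℝ)
    (sg : (Fin n → ℝ) → ℝ)
    (hgsym : ∀ a b, g a b = g b a)
    (hginvsym : ∀ a b, ginv a b = ginv b a)
    (hinv : ∀ (a b : Fin n) (x : Fin n → ℝ),
      ∑ c, ginv a c x * g c b x = if a = b then (1 : ℝ) else 0)
    (hgdiff : ∀ a b, Differentiable ℝ (g a b))
    (hginvdiff : ∀ a b, Differentiable ℝ (ginv a b))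
    (hsgdiff : Differentiable ℝ sg)
    (hsgpos : ∀ x, 0 < sg x)
    (hsg : ∀ (d : Fin n) (x : Fin n → ℝ),
      pd d sg x = (1 / 2) * sg x * ∑ b, ∑ c, ginv b c x * pd d (g b c) x)
    (htorsionfree : ∀ a b c x, Γ a b c x = Γ a c b x)
    (hflat : ∀ a b c d x, riem Γ a b c d x = 0) :
    (∀ (a b c : Fin n) (x : Fin n → ℝ),
      pConj g ginv Γ b c a x - (sg x)⁻¹ * covDivLamR ginv Γ sg a c b x
        = (1 / 4) * (qUD g ginv Γ c b a x - qUD g ginv Γ b c a x)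
          - (1 / 4) * (kron c a * qTilUp g ginv Γ b x - kron b a * qTilUp g ginv Γ c x)
          + (1 / 4) * (kron c a * qTrUp g ginv Γ b x - kron b a * qTrUp g ginv Γ c x))
    ∧ (∀ (a b c : Fin n) (x : Fin n → ℝ),
        pConj g ginv Γ b c a x - (sg x)⁻¹ * covDivLamR ginv Γ sg a c b x
          = -(pConj g ginv Γ c b a x - (sg x)⁻¹ * covDivLamR ginv Γ sg a b c x)) := by
  have key : ∀ (a b c : Fin n) (x : Fin n → ℝ),
      pConj g ginv Γ b c a x - (sg x)⁻¹ * covDivLamR ginv Γ sg a c b x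
        = (1 / 4) * (qUD g ginv Γ c b a x - qUD g ginv Γ b c a x)
          - (1 / 4) * (kron c a * qTilUp g ginv Γ b x - kron b a * qTilUp g ginv Γ c x)
          + (1 / 4) * (kron c a * qTrUp g ginv Γ b x - kron b a * qTrUp g ginv Γ c x) := by
    intro a b c x
    rw [covdiv_eq g ginv Γ sg hgsym hginvsym hinv hgdiff hginvdiff hsgdiff hsg htorsionfree a c b x,
      ← mul_assoc, inv_mul_cancel₀ (ne_of_gt (hsgpos x)), one_mul]
    simp only [pConj]
    ring
  exact ⟨key, fun a b c x => by rw [key a b c x, key a c b x]; ring⟩
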